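/- Let p > 2 and q > p − 1 with q ≠ p. For every constant Λ > λ₁* there exists a 2π-periodic C¹ function u : ℝ → ℝ such that ‖u'‖_p² < (Λ/(p − q)) · (‖u‖_p² − ‖u‖_q²). (This expresses the upper bound Λ_{p,q} ≤ λ₁* for the sharp constant of the interpolation inequality in Theorem 1.1.) -/

import Mathlib

open MeasureTheory Real Filter Set Topology ENNReal

/-- The L^r norm on the circle with the uniform probability measure dσ = dx/(2π),
for a 2π-periodic function `u : ℝ → ℝ`. -/
noncomputable def perNorm (r : ℝ) (u : ℝ → ℝ) : ℝ :=
  ((1 / (2 * π)) * ∫ x in (0:ℝ)..(2 * π), |u x| ^ r) ^ (1 / r)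

/-- `u` is 2π-periodic and C¹. -/
def PeriodicC1 (u : ℝ → ℝ) : Prop :=
  Function.Periodic u (2 * π) ∧ ContDiff ℝ 1 u

/-- λ₁ = inf ‖v'‖_p²/‖v‖_p² over 2π-periodic C¹ functions v ≢ 0 with ∫₀^{2π} v dx = 0. -/
noncomputable def lambdaOne (p : ℝ) : ℝ :=
  sInf { l : ℝ | ∃ v : ℝ → ℝ, PeriodicC1 v ∧ v ≠ 0 ∧
    (∫ x in (0:ℝ)..(2 * π), v x) = 0 ∧
    l = (perNorm p (deriv v)) ^ 2 / (perNorm p v) ^ 2 }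

/-- λ₁* = inf ‖v'‖_p²/‖v‖_2² over 2π-periodic C¹ functions v ≢ 0 with ∫₀^{2π} v dx = 0. -/
noncomputable def lambdaOneStar (p : ℝ) : ℝ :=
  sInf { l : ℝ | ∃ v : ℝ → ℝ, PeriodicC1 v ∧ v ≠ 0 ∧
    (∫ x in (0:ℝ)..(2 * π), v x) = 0 ∧
    l = (perNorm p (deriv v)) ^ 2 / (perNorm 2 v) ^ 2 }

/-- The p-Laplacian L_p u = (|u'|^{p-2} u')'. -/
noncomputable def pLap (p : ℝ) (u : ℝ → ℝ) : ℝ → ℝ :=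
  deriv (fun x => |deriv u x| ^ (p - 2) * deriv u x)

lemma taylor2 (r : ℝ) {η : ℝ} (hη : 0 < η) :
    ∃ δ : ℝ, 0 < δ ∧ δ ≤ 1/2 ∧ ∀ t : ℝ, |t| ≤ δ →
      |(1 + t) ^ r - (1 + r * t + r * (r - 1) / 2 * t ^ 2)| ≤ η * t ^ 2 := by
  have hcont : ContinuousAt (fun s : ℝ => r * (r - 1) * ((1 + s) ^ (r - 2) - 1)) 0 := by
    apply ContinuousAt.mul continuousAt_const
    apply ContinuousAt.sub _ continuousAt_const
    exact ContinuousAt.rpow_const (by fun_prop) (Or.inl (by norm_num))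
  have h0 : (fun s : ℝ => r * (r - 1) * ((1 + s) ^ (r - 2) - 1)) 0 = 0 := by
    simp [Real.one_rpow]
  rw [Metric.continuousAt_iff] at hcont
  obtain ⟨δ', hδ', hb⟩ := hcont η hη
  refine ⟨min (δ'/2) (1/2), by positivity, min_le_right _ _, ?_⟩
  set δ := min (δ'/2) (1/2) with hδdef
  have hδhalf : δ ≤ 1/2 := min_le_right _ _
  have hδδ' : δ < δ' := lt_of_le_of_lt (min_le_left _ _) (by linarith)
  have hbound : ∀ s : ℝ, |s| ≤ δ → |r * (r - 1) * ((1 + s) ^ (r - 2) - 1)| ≤ η := by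
    intro s hs
    have := hb (x := s) (by simpa [Real.dist_eq] using lt_of_le_of_lt hs hδδ')
    rw [Real.dist_eq] at this
    simpa [Real.one_rpow] using this.le
  set f : ℝ → ℝ := fun t => (1 + t) ^ r - (1 + r * t + r * (r - 1) / 2 * t ^ 2) with hfdef
  set f1 : ℝ → ℝ := fun t => r * (1 + t) ^ (r - 1) - (r + r * (r - 1) * t) with hf1def
  have hpos : ∀ s : ℝ, |s| ≤ δ → (0:ℝ) < 1 + s := by
    intro s hs
    have h := abs_le.1 hs
    have : -(1/2 : ℝ) ≤ s := by linarith [h.1]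
    linarith
  have hf : ∀ s : ℝ, |s| ≤ δ → HasDerivAt f (f1 s) s := by
    intro s hs
    have h1s := hpos s hs
    have hg : HasDerivAt (fun t : ℝ => (1 + t) ^ r) (r * (1 + s) ^ (r - 1)) s := by
      have := (Real.hasDerivAt_rpow_const (x := 1 + s) (p := r) (Or.inl h1s.ne')).comp s
        ((hasDerivAt_id s).const_add 1)
      simpa [Function.comp_def] using this
    have hpoly : HasDerivAt (fun t : ℝ => 1 + r * t + r * (r - 1) / 2 * t ^ 2)
        (r + r * (r - 1) * s) s := by
      have h1 : HasDerivAt (fun t : ℝ => 1 + r * t) r s := by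
        simpa using ((hasDerivAt_id s).const_mul r).const_add 1
      have h2 : HasDerivAt (fun t : ℝ => r * (r - 1) / 2 * t ^ 2)
          (r * (r - 1) / 2 * (2 * s)) s := by
        simpa using (hasDerivAt_pow 2 s).const_mul (r * (r - 1) / 2)
      have := h1.add h2
      exact this.congr_deriv (by ring)
    exact hg.sub hpoly
  have hf1 : ∀ s : ℝ, |s| ≤ δ → HasDerivAt f1 (r * (r - 1) * ((1 + s) ^ (r - 2) - 1)) s := by
    intro s hs
    have h1s := hpos s hs
    have hg : HasDerivAt (fun t : ℝ => r * (1 + t) ^ (r - 1)) (r * ((r-1) * (1 + s) ^ (r - 2))) s := by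
      have := ((Real.hasDerivAt_rpow_const (x := 1 + s) (p := r - 1) (Or.inl h1s.ne')).comp s
        ((hasDerivAt_id s).const_add 1)).const_mul r
      have h2 : r - 1 - 1 = r - 2 := by ring
      simpa [h2, mul_comm, mul_assoc, mul_left_comm] using this
    have hpoly : HasDerivAt (fun t : ℝ => r + r * (r - 1) * t) (r * (r - 1)) s := by
      simpa using ((hasDerivAt_id s).const_mul (r * (r - 1))).const_add r
    have := hg.sub hpoly
    exact this.congr_deriv (by ring)
  have habs : ∀ s : ℝ, |s| ≤ δ → ∀ x ∈ Icc (-|s|) |s|, |x| ≤ δ := by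
    intro s hs x hx
    rw [abs_le]
    constructor
    · linarith [hx.1, (abs_le.1 hs).1, neg_abs_le s, abs_nonneg s, hs]
    · linarith [hx.2, hs]
  have step1 : ∀ s : ℝ, |s| ≤ δ → |f1 s| ≤ η * |s| := by
    intro s hs
    have key := (convex_Icc (-|s|) |s|).norm_image_sub_le_of_norm_hasDerivWithin_le
      (f := f1) (f' := fun x => r * (r - 1) * ((1 + x) ^ (r - 2) - 1)) (C := η)
      (fun x hx => (hf1 x (habs s hs x hx)).hasDerivWithinAt)
      (fun x hx => by rw [Real.norm_eq_abs]; exact hbound x (habs s hs x hx))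
      ⟨by simpa using abs_nonneg s, abs_nonneg s⟩ ⟨neg_abs_le s, le_abs_self s⟩
    have hf10 : f1 0 = 0 := by simp [hf1def, Real.one_rpow]
    rw [hf10, sub_zero, sub_zero, Real.norm_eq_abs, Real.norm_eq_abs] at key
    exact key
  intro t ht
  have key := (convex_Icc (-|t|) |t|).norm_image_sub_le_of_norm_hasDerivWithin_le
    (f := f) (f' := f1) (C := η * |t|)
    (fun x hx => (hf x (habs t ht x hx)).hasDerivWithinAt)
    (fun x hx => by
      rw [Real.norm_eq_abs]
      refine (step1 x (habs t ht x hx)).trans ?_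
      have hxt : |x| ≤ |t| := abs_le.2 hx
      nlinarith [abs_nonneg x])
    ⟨by simpa using abs_nonneg t, abs_nonneg t⟩ ⟨neg_abs_le t, le_abs_self t⟩
  have hf0 : f 0 = 0 := by simp [hfdef, Real.one_rpow]
  rw [hf0, sub_zero, sub_zero, Real.norm_eq_abs, Real.norm_eq_abs] at key
  calc |f t| ≤ η * |t| * |t| := key
    _ = η * t ^ 2 := by rw [mul_assoc, ← abs_mul, ← sq, abs_sq]

lemma phi_tendsto (r : ℝ) (v : ℝ → ℝ) (hv : Continuous v) (K : ℝ) (hK0 : 0 < K)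
    (hK : ∀ x, |v x| ≤ K) (hmean : (∫ x in (0:ℝ)..(2*π), v x) = 0) :
    Tendsto (fun ε : ℝ => ((1/(2*π)) * (∫ x in (0:ℝ)..(2*π), (1 + ε * v x) ^ r) - 1) / ε ^ 2)
      (𝓝[>] 0) (𝓝 (r * (r - 1) / 2 * ((1/(2*π)) * ∫ x in (0:ℝ)..(2*π), (v x) ^ 2))) := by
  set c := r * (r - 1) / 2 with hc
  set σ := (1/(2*π)) * ∫ x in (0:ℝ)..(2*π), (v x) ^ 2 with hσ
  rw [Metric.tendsto_nhdsWithin_nhds]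
  intro ζ hζ
  set η := ζ / (2 * K ^ 2) with hη
  have hηpos : 0 < η := by positivity
  obtain ⟨δ, hδ0, hδhalf, htay⟩ := taylor2 r hηpos
  refine ⟨δ / K, by positivity, ?_⟩
  intro ε hε hdist
  have hε0 : 0 < ε := hε
  have hεK : ε * K ≤ δ := by
    rw [Real.dist_eq, sub_zero, abs_of_pos hε0] at hdist
    calc ε * K ≤ (δ / K) * K := by nlinarith
      _ = δ := by field_simp
  have hpt : ∀ x : ℝ, |ε * v x| ≤ δ := by
    intro x
    rw [abs_mul, abs_of_pos hε0]
    calc ε * |v x| ≤ ε * K := by nlinarith [hK x]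
      _ ≤ δ := hεK
  have hposbase : ∀ x : ℝ, (0:ℝ) < 1 + ε * v x := by
    intro x
    have := abs_le.1 (hpt x)
    linarith [hδhalf]
  have hcont1 : Continuous (fun x : ℝ => (1 + ε * v x) ^ r) := by
    apply Continuous.rpow_const (by fun_prop)
    exact fun x => Or.inl (hposbase x).ne'
  have hcont2 : Continuous (fun x : ℝ => 1 + r * (ε * v x) + c * (ε * v x) ^ 2) := by fun_prop
  have hint1 : IntervalIntegrable (fun x : ℝ => (1 + ε * v x) ^ r) volume 0 (2*π) :=
    hcont1.intervalIntegrable _ _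
  have hint2 : IntervalIntegrable (fun x : ℝ => 1 + r * (ε * v x) + c * (ε * v x) ^ 2)
      volume 0 (2*π) := hcont2.intervalIntegrable _ _
  have hI2 : (∫ x in (0:ℝ)..(2*π), (1 + r * (ε * v x) + c * (ε * v x) ^ 2))
      = 2*π + c * ε ^ 2 * (∫ x in (0:ℝ)..(2*π), (v x) ^ 2) := by
    have e1 : (fun x : ℝ => 1 + r * (ε * v x) + c * (ε * v x) ^ 2)
        = fun x : ℝ => 1 + ((r * ε) * v x + (c * ε ^ 2) * (v x) ^ 2) := by
      funext x; ring
    rw [e1, intervalIntegral.integral_add intervalIntegrable_const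
      ((by fun_prop : Continuous fun x : ℝ => (r * ε) * v x + (c * ε ^ 2) * (v x) ^ 2).intervalIntegrable _ _),
      intervalIntegral.integral_add ((by fun_prop : Continuous fun x : ℝ => (r * ε) * v x).intervalIntegrable _ _)
      ((by fun_prop : Continuous fun x : ℝ => (c * ε ^ 2) * (v x) ^ 2).intervalIntegrable _ _),
      intervalIntegral.integral_const_mul, intervalIntegral.integral_const_mul, hmean]
    simp
  have hbnd : |∫ x in (0:ℝ)..(2*π), ((1 + ε * v x) ^ r - (1 + r * (ε * v x) + c * (ε * v x) ^ 2))|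
      ≤ η * ε ^ 2 * K ^ 2 * (2*π) := by
    have := intervalIntegral.norm_integral_le_of_norm_le_const
      (C := η * ε ^ 2 * K ^ 2)
      (f := fun x : ℝ => (1 + ε * v x) ^ r - (1 + r * (ε * v x) + c * (ε * v x) ^ 2))
      (a := (0:ℝ)) (b := 2*π) ?_
    · rw [Real.norm_eq_abs] at this
      calc |∫ x in (0:ℝ)..(2*π), ((1 + ε * v x) ^ r - (1 + r * (ε * v x) + c * (ε * v x) ^ 2))|
          ≤ η * ε ^ 2 * K ^ 2 * |2*π - 0| := this
        _ = η * ε ^ 2 * K ^ 2 * (2*π) := by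
            rw [sub_zero, abs_of_pos (by positivity)]
    · intro x hx
      rw [Real.norm_eq_abs]
      have h1 := htay (ε * v x) (hpt x)
      calc |(1 + ε * v x) ^ r - (1 + r * (ε * v x) + c * (ε * v x) ^ 2)| ≤ η * (ε * v x) ^ 2 := h1
        _ ≤ η * ε ^ 2 * K ^ 2 := by
            rw [mul_pow, ← mul_assoc]
            have h2 : (v x) ^ 2 ≤ K ^ 2 :=
              sq_le_sq' (by linarith [(abs_le.1 (hK x)).1]) (abs_le.1 (hK x)).2
            exact mul_le_mul_of_nonneg_left h2 (by positivity)
  have hdiffint : (∫ x in (0:ℝ)..(2*π), ((1 + ε * v x) ^ r - (1 + r * (ε * v x) + c * (ε * v x) ^ 2)))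
      = (∫ x in (0:ℝ)..(2*π), (1 + ε * v x) ^ r) - (2*π + c * ε ^ 2 * (∫ x in (0:ℝ)..(2*π), (v x) ^ 2)) := by
    rw [intervalIntegral.integral_sub hint1 hint2, hI2]
  have hπ : (2*π) ≠ 0 := by positivity
  have hkey : ((1/(2*π)) * (∫ x in (0:ℝ)..(2*π), (1 + ε * v x) ^ r) - 1) / ε ^ 2 - c * σ
      = (1/(2*π)) * (∫ x in (0:ℝ)..(2*π), ((1 + ε * v x) ^ r - (1 + r * (ε * v x) + c * (ε * v x) ^ 2))) / ε ^ 2 := by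
    rw [hdiffint, hσ]
    field_simp
    ring
  rw [Real.dist_eq, hkey]
  have hfin : |(1/(2*π)) * (∫ x in (0:ℝ)..(2*π), ((1 + ε * v x) ^ r - (1 + r * (ε * v x) + c * (ε * v x) ^ 2))) / ε ^ 2|
      ≤ η * K ^ 2 := by
    rw [abs_div, abs_mul, abs_of_pos (by positivity : (0:ℝ) < 1/(2*π)), abs_of_pos (by positivity : (0:ℝ) < ε ^ 2)]
    rw [div_le_iff₀ (by positivity)]
    calc 1/(2*π) * |∫ x in (0:ℝ)..(2*π), ((1 + ε * v x) ^ r - (1 + r * (ε * v x) + c * (ε * v x) ^ 2))|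
        ≤ 1/(2*π) * (η * ε ^ 2 * K ^ 2 * (2*π)) := by
          apply mul_le_mul_of_nonneg_left hbnd (by positivity)
      _ = η * K ^ 2 * ε ^ 2 := by field_simp
  calc |(1/(2*π)) * (∫ x in (0:ℝ)..(2*π), ((1 + ε * v x) ^ r - (1 + r * (ε * v x) + c * (ε * v x) ^ 2))) / ε ^ 2|
      ≤ η * K ^ 2 := hfin
    _ = ζ / 2 := by rw [hη]; field_simp
    _ < ζ := by linarith

lemma psi_tendsto (Φ : ℝ → ℝ) (a c : ℝ) (hc : 0 < c)
    (h : Tendsto (fun ε => (Φ ε - 1) / ε ^ 2) (𝓝[>] (0:ℝ)) (𝓝 c)) :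
    Tendsto (fun ε => ((Φ ε) ^ a - 1) / ε ^ 2) (𝓝[>] (0:ℝ)) (𝓝 (a * c)) := by
  have hε2 : ∀ᶠ ε in 𝓝[>] (0:ℝ), (0:ℝ) < ε ^ 2 := by
    filter_upwards [self_mem_nhdsWithin] with ε (hε : ε ∈ Ioi (0:ℝ))
    exact pow_pos hε 2
  have hqpos : ∀ᶠ ε in 𝓝[>] (0:ℝ), 0 < (Φ ε - 1) / ε ^ 2 := h.eventually_const_lt hc
  have hΦgt : ∀ᶠ ε in 𝓝[>] (0:ℝ), 0 < Φ ε - 1 := by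
    filter_upwards [hε2, hqpos] with ε h1 h2
    by_contra hcon
    push_neg at hcon
    have : (Φ ε - 1) / ε ^ 2 ≤ 0 := div_nonpos_of_nonpos_of_nonneg hcon h1.le
    linarith
  have hε2t : Tendsto (fun ε : ℝ => ε ^ 2) (𝓝[>] (0:ℝ)) (𝓝 0) := by
    have := ((continuous_pow 2).tendsto (0:ℝ)).mono_left (nhdsWithin_le_nhds (s := Ioi (0:ℝ)))
    simpa using this
  have hΦ1 : Tendsto Φ (𝓝[>] (0:ℝ)) (𝓝 1) := by
    have hmul : Tendsto (fun ε : ℝ => (Φ ε - 1) / ε ^ 2 * ε ^ 2 + 1) (𝓝[>] (0:ℝ)) (𝓝 (c * 0 + 1)) :=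
      (h.mul hε2t).add tendsto_const_nhds
    rw [mul_zero, zero_add] at hmul
    apply hmul.congr'
    filter_upwards [hε2] with ε h1
    rw [div_mul_cancel₀ _ h1.ne']; ring
  have hne : Tendsto Φ (𝓝[>] (0:ℝ)) (𝓝[≠] (1:ℝ)) := by
    rw [tendsto_nhdsWithin_iff]
    refine ⟨hΦ1, ?_⟩
    filter_upwards [hΦgt] with ε h1
    simp only [Set.mem_compl_iff, Set.mem_singleton_iff]
    intro hcon; rw [hcon] at h1; simp at h1
  have hder : HasDerivAt (fun s : ℝ => s ^ a) a 1 := by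
    have := Real.hasDerivAt_rpow_const (x := (1:ℝ)) (p := a) (Or.inl one_ne_zero)
    simpa using this
  rw [hasDerivAt_iff_tendsto_slope] at hder
  have hslope : Tendsto (fun ε => slope (fun s : ℝ => s ^ a) 1 (Φ ε)) (𝓝[>] (0:ℝ)) (𝓝 a) :=
    hder.comp hne
  have hprod := hslope.mul h
  apply hprod.congr'
  filter_upwards [hΦgt] with ε h1
  have hne1 : Φ ε - 1 ≠ 0 := by linarith
  rw [slope_def_field]
  field_simp [div_eq_div_iff hne1]
  rw [Real.one_rpow]

lemma perNorm_sq_eq (r : ℝ) (hr : 0 < r) (v : ℝ → ℝ) (hv : Continuous v) {ε : ℝ} (hε : 0 < ε)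
    (hpos : ∀ x, 0 < 1 + ε * v x) :
    perNorm r (fun x => 1/ε + v x) ^ 2
      = (1/ε)^2 * (((1/(2*π)) * ∫ x in (0:ℝ)..(2*π), (1 + ε * v x) ^ r) ^ (2/r)) := by
  have hpt : ∀ x : ℝ, |(fun x => 1/ε + v x) x| ^ r = (1/ε)^r * (1 + ε * v x) ^ r := by
    intro x
    have h1 : (1/ε + v x) = (1/ε) * (1 + ε * v x) := by field_simp
    have h2 : (0:ℝ) < 1/ε + v x := by
      rw [h1]; exact mul_pos (by positivity) (hpos x)
    simp only
    rw [abs_of_pos h2, h1, Real.mul_rpow (by positivity) (hpos x).le]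
  have hI : (∫ x in (0:ℝ)..(2*π), |(fun x => 1/ε + v x) x| ^ r)
      = (1/ε)^r * ∫ x in (0:ℝ)..(2*π), (1 + ε * v x) ^ r := by
    rw [← intervalIntegral.integral_const_mul]
    exact intervalIntegral.integral_congr (fun x _ => hpt x)
  have hJnn : (0:ℝ) ≤ (1/(2*π)) * ∫ x in (0:ℝ)..(2*π), (1 + ε * v x) ^ r := by
    apply mul_nonneg (by positivity)
    apply intervalIntegral.integral_nonneg (by positivity)
    intro x _
    exact Real.rpow_nonneg (hpos x).le r
  set J := (1/(2*π)) * ∫ x in (0:ℝ)..(2*π), (1 + ε * v x) ^ r with hJ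
  have hstep : perNorm r (fun x => 1/ε + v x) = (1/ε) * J ^ (1/r) := by
    rw [perNorm, hI, hJ]
    rw [show (1/(2*π)) * ((1/ε)^r * ∫ x in (0:ℝ)..(2*π), (1 + ε * v x) ^ r)
        = (1/ε)^r * ((1/(2*π)) * ∫ x in (0:ℝ)..(2*π), (1 + ε * v x) ^ r) by ring]
    rw [Real.mul_rpow (Real.rpow_nonneg (by positivity) r) hJnn]
    congr 1
    rw [one_div r, Real.rpow_rpow_inv (by positivity) hr.ne']
  rw [hstep, mul_pow]
  congr 1
  rw [← Real.rpow_natCast (J ^ (1/r)) 2, ← Real.rpow_mul hJnn]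
  norm_num
  rw [show r⁻¹ * 2 = 2 / r by rw [div_eq_mul_inv]; ring]

lemma perNorm_two_sq (v : ℝ → ℝ) :
    perNorm 2 v ^ 2 = (1/(2*π)) * ∫ x in (0:ℝ)..(2*π), (v x) ^ 2 := by
  have hpt : ∀ x : ℝ, |v x| ^ (2:ℝ) = (v x) ^ 2 := by
    intro x
    rw [show (2:ℝ) = ((2:ℕ):ℝ) by norm_num, Real.rpow_natCast, sq_abs]
  have hI : (∫ x in (0:ℝ)..(2*π), |v x| ^ (2:ℝ)) = ∫ x in (0:ℝ)..(2*π), (v x) ^ 2 :=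
    intervalIntegral.integral_congr (fun x _ => hpt x)
  have hnn : (0:ℝ) ≤ (1/(2*π)) * ∫ x in (0:ℝ)..(2*π), (v x) ^ 2 := by
    apply mul_nonneg (by positivity)
    apply intervalIntegral.integral_nonneg (by positivity)
    intro x _; positivity
  rw [perNorm, hI]
  rw [← Real.rpow_natCast ((1/(2*π) * ∫ x in (0:ℝ)..(2*π), (v x) ^ 2) ^ (1/(2:ℝ))) 2,
    ← Real.rpow_mul hnn]
  norm_num

lemma periodic_bdd (v : ℝ → ℝ) (hv : Continuous v) (hper : Function.Periodic v (2*π)) :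
    ∃ K : ℝ, 0 < K ∧ ∀ x, |v x| ≤ K := by
  obtain ⟨C, hC⟩ := (isCompact_Icc (a := (0:ℝ)) (b := 2*π)).exists_bound_of_continuousOn
    hv.continuousOn
  refine ⟨max C 1, by positivity, fun x => ?_⟩
  have hy : toIcoMod Real.two_pi_pos 0 x ∈ Ico (0:ℝ) (2*π) := toIcoMod_mem_Ico' _ _
  have hvy : v (toIcoMod Real.two_pi_pos 0 x) = v x := by
    rw [toIcoMod]
    exact hper.sub_zsmul_eq _
  have := hC (toIcoMod Real.two_pi_pos 0 x) ⟨hy.1, hy.2.le⟩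
  rw [Real.norm_eq_abs, hvy] at this
  exact this.trans (le_max_left _ _)

lemma sq_integral_pos (v : ℝ → ℝ) (hv : Continuous v) (hper : Function.Periodic v (2*π))
    (hne : v ≠ 0) : 0 < ∫ x in (0:ℝ)..(2*π), (v x) ^ 2 := by
  obtain ⟨x₀, hx₀⟩ : ∃ x, v x ≠ 0 := by
    by_contra hcon; push_neg at hcon
    exact hne (funext hcon)
  set z := toIocMod Real.two_pi_pos 0 x₀ with hz
  have hzmem : z ∈ Ioc (0:ℝ) (0 + 2*π) := toIocMod_mem_Ioc _ _ _
  rw [zero_add] at hzmem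
  have hvz : v z ≠ 0 := by
    rw [hz, toIocMod, hper.sub_zsmul_eq]
    exact hx₀
  have hU : IsOpen {x : ℝ | v x ≠ 0} := isOpen_compl_singleton.preimage hv
  obtain ⟨ζ, hζ0, hball⟩ := Metric.isOpen_iff.1 hU z hvz
  set ζ' := min ζ z with hζ'
  have hζ'0 : 0 < ζ' := lt_min hζ0 hzmem.1
  have hsub : Ioo (z - ζ') z ⊆ Function.support (fun x => (v x)^2) ∩ Ioc 0 (2*π) := by
    intro x hx
    constructor
    · have hxb : x ∈ Metric.ball z ζ := by
        rw [Metric.mem_ball, Real.dist_eq, abs_lt]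
        refine ⟨by linarith [hx.1, min_le_left ζ z], by linarith [hx.2, hζ0]⟩
      have hvx : v x ≠ 0 := hball hxb
      simp only [Function.mem_support]
      exact pow_ne_zero 2 hvx
    · exact ⟨by linarith [hx.1, min_le_right ζ z], by linarith [hx.2, hzmem.2]⟩
  rw [intervalIntegral.integral_pos_iff_support_of_nonneg_ae
    (Eventually.of_forall (fun x => sq_nonneg (v x)))
    ((hv.pow 2).intervalIntegrable _ _)]
  refine ⟨by positivity, ?_⟩
  calc (0:ℝ≥0∞) < volume (Ioo (z - ζ') z) := by
        rw [Real.volume_Ioo]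
        simp only [ENNReal.ofReal_pos]
        linarith
    _ ≤ _ := measure_mono hsub

/-- the upper bound Λ_{p,q} ≤ λ₁* for the sharp interpolation constant. -/
theorem interp_sharp_upper_bound (p q : ℝ) (hp : 2 < p) (hq : p - 1 < q) (hpq : q ≠ p)
    (L : ℝ) (hL : lambdaOneStar p < L) :
    ∃ u : ℝ → ℝ, PeriodicC1 u ∧
      (perNorm p (deriv u)) ^ 2 <
        (L / (p - q)) * ((perNorm p u) ^ 2 - (perNorm q u) ^ 2) := by
  have hp1 : (1:ℝ) < p := by linarith
  have hq1 : (1:ℝ) < q := by linarith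
  have hpq' : p - q ≠ 0 := sub_ne_zero.2 (fun h => hpq h.symm)
  -- the set defining lambdaOneStar is nonempty
  set S := { l : ℝ | ∃ v : ℝ → ℝ, PeriodicC1 v ∧ v ≠ 0 ∧
    (∫ x in (0:ℝ)..(2 * π), v x) = 0 ∧
    l = (perNorm p (deriv v)) ^ 2 / (perNorm 2 v) ^ 2 } with hS
  have hSne : S.Nonempty := by
    refine ⟨_, Real.sin, ⟨Real.sin_periodic, Real.contDiff_sin⟩, ?_, ?_, rfl⟩
    · intro hcon
      have := congrFun hcon (π/2)
      rw [Real.sin_pi_div_two] at this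
      simpa using this
    · rw [integral_sin, Real.cos_zero, Real.cos_two_pi]
      ring
  -- extract a test function with Rayleigh quotient < L
  have hex : ∃ l ∈ S, l < L := by
    by_contra hcon
    push_neg at hcon
    have : L ≤ lambdaOneStar p := le_csInf hSne hcon
    linarith
  obtain ⟨l, ⟨v, hvper, hvne, hvmean, hleq⟩, hlL⟩ := hex
  have hv : Continuous v := hvper.2.continuous
  obtain ⟨K, hK0, hK⟩ := periodic_bdd v hv hvper.1
  set σ := (1/(2*π)) * ∫ x in (0:ℝ)..(2*π), (v x) ^ 2 with hσ
  have hσpos : 0 < σ := by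
    apply _root_.mul_pos (by positivity)
    exact sq_integral_pos v hv hvper.1 hvne
  set A := perNorm p (deriv v) with hA
  have hAL : A ^ 2 < L * σ := by
    rw [hleq, perNorm_two_sq, ← hσ] at hlL
    exact (div_lt_iff₀ hσpos).1 hlL
  -- limits
  set Φp : ℝ → ℝ := fun ε => (1/(2*π)) * ∫ x in (0:ℝ)..(2*π), (1 + ε * v x) ^ p with hΦp
  set Φq : ℝ → ℝ := fun ε => (1/(2*π)) * ∫ x in (0:ℝ)..(2*π), (1 + ε * v x) ^ q with hΦq
  have hcp : (0:ℝ) < p * (p - 1) / 2 * σ := by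
    apply _root_.mul_pos _ hσpos
    have : 0 < p * (p-1) := _root_.mul_pos (by linarith) (by linarith)
    linarith
  have hcq : (0:ℝ) < q * (q - 1) / 2 * σ := by
    apply _root_.mul_pos _ hσpos
    have : 0 < q * (q-1) := _root_.mul_pos (by linarith) (by linarith)
    linarith
  have hDp := psi_tendsto Φp (2/p) (p * (p - 1) / 2 * σ) hcp
    (phi_tendsto p v hv K hK0 hK hvmean)
  have hDq := psi_tendsto Φq (2/q) (q * (q - 1) / 2 * σ) hcq
    (phi_tendsto q v hv K hK0 hK hvmean)
  have hD := ((hDp.sub hDq).const_mul (L / (p - q)))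
  have hlim : (L / (p - q)) * ((2/p) * (p * (p - 1) / 2 * σ) - (2/q) * (q * (q - 1) / 2 * σ))
      = L * σ := by
    field_simp
    ring
  rw [hlim] at hD
  have heva : ∀ᶠ ε in 𝓝[>] (0:ℝ),
      A ^ 2 < (L / (p - q)) * (((Φp ε) ^ (2/p) - 1) / ε ^ 2 - ((Φq ε) ^ (2/q) - 1) / ε ^ 2) :=
    hD.eventually_const_lt hAL
  have hIoo : Ioo (0:ℝ) (1/K) ∈ 𝓝[>] (0:ℝ) :=
    Ioo_mem_nhdsGT_of_mem ⟨le_refl 0, by positivity⟩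
  obtain ⟨ε, hεineq, hεIoo⟩ := (heva.and (eventually_mem_set.2 hIoo)).exists
  have hε0 : 0 < ε := hεIoo.1
  have hεK : ε * K < 1 := by
    have := hεIoo.2
    rw [lt_div_iff₀ hK0] at this
    linarith
  have hpos : ∀ x, 0 < 1 + ε * v x := by
    intro x
    have h1 : ε * v x ≥ -(ε * K) := by
      have := (abs_le.1 (hK x)).1
      nlinarith
    linarith
  refine ⟨fun x => 1/ε + v x, ⟨fun x => by simp [hvper.1 x], contDiff_const.add hvper.2⟩, ?_⟩
  have hderiv : deriv (fun x => 1/ε + v x) = deriv v := deriv_const_add' _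
  rw [hderiv, ← hA]
  rw [perNorm_sq_eq p (by linarith) v hv hε0 hpos, perNorm_sq_eq q (by linarith) v hv hε0 hpos]
  have halg : (1/ε)^2 * ((Φp ε) ^ (2/p)) - (1/ε)^2 * ((Φq ε) ^ (2/q))
      = ((Φp ε) ^ (2/p) - 1) / ε ^ 2 - ((Φq ε) ^ (2/q) - 1) / ε ^ 2 := by
    field_simp
    ring
  rw [hΦp, hΦq] at halg
  rw [halg]
  exact hεineq
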